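/- For positive integers α and β with 1 ≤ α, β ≤ p-1 for a prime p ≥ 3, ∑_{k=0}^{α} (-1)^k C(α,k) C(β,k) C(-1-α-β,k) = C(α+β, α)^2. In particular, if additionally α + β ≥ p, this sum is divisible by p^2. -/

import Mathlib

/-- Generalized binomial coefficient `C(x,k) = x(x-1)⋯(x-k+1)/k!` for rational `x`. -/
def gbinom (x : ℚ) (k : ℕ) : ℚ := (∏ i ∈ Finset.range k, (x - i)) / (Nat.factorial k)

namespace SaalAux

open Finset

noncomputable def Wf (x : ℚ) (a k : ℕ) : ℚ :=
  ∏ i ∈ Finset.range k, ((x - i) * (x + a + 1 + i))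

noncomputable def Tf (x : ℚ) (a k : ℕ) : ℚ :=
  (a.choose k : ℚ) * Wf x a k / ((k.factorial : ℚ))^2

noncomputable def Uf (x : ℚ) (a k : ℕ) : ℚ :=
  -(k:ℚ)^3 * (x + 2*a + 2) * (((a+1).choose k : ℚ)) * Wf x a k /
    (((a:ℚ)+1) * (x + a + 1) * ((k.factorial : ℚ))^2)

lemma Wf_succ (x : ℚ) (a k : ℕ) :
    Wf x a (k+1) = Wf x a k * ((x - k) * (x + a + 1 + k)) := by
  simp [Wf, Finset.prod_range_succ]

lemma Wf_shift (x : ℚ) (a : ℕ) : ∀ k : ℕ,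
    (x + a + 1) * Wf x (a+1) k = (x + a + 1 + k) * Wf x a k := by
  intro k
  induction k with
  | zero => simp [Wf]
  | succ k ih =>
      rw [Wf_succ, Wf_succ]
      push_cast at ih ⊢
      linear_combination ((x - (k:ℚ)) * (x + a + 2 + k)) * ih

lemma core (a k : ℕ) (x : ℚ) :
    ((a:ℚ)+1)^3 * (((a+1).choose k : ℚ)) * (x + a + 1 + k)
      - ((a:ℚ)+1) * (x + a + 1)^3 * ((a.choose k : ℚ))
      + (x + 2*a + 2) * (((k:ℚ)+1) * (((a+1).choose (k+1) : ℚ))) * (x - k) * (x + a + 1 + k)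
      - (k:ℚ)^3 * (x + 2*a + 2) * (((a+1).choose k : ℚ)) = 0 := by
  rcases le_or_gt k (a+1) with hk | hk
  · obtain ⟨j, hj⟩ : ∃ j, k + j = a + 1 := ⟨a + 1 - k, by omega⟩
    have r1 : (a+1).choose (k+1) * (k+1) = (a+1).choose k * j := by
      rw [Nat.choose_succ_right_eq]; congr 1; omega
    have r2 : a.choose k * (a+1) = (a+1).choose k * j := by
      rw [Nat.choose_mul_succ_eq]; congr 1; omega
    have r1' : (((a+1).choose (k+1) : ℚ)) * ((k:ℚ)+1) = (((a+1).choose k : ℚ)) * j := by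
      exact_mod_cast congrArg (Nat.cast : ℕ → ℚ) r1
    have r2' : ((a.choose k : ℚ)) * ((k:ℚ) + j) = (((a+1).choose k : ℚ)) * j := by
      have := congrArg (Nat.cast : ℕ → ℚ) r2
      push_cast at this
      have ha : (a:ℚ) + 1 = (k:ℚ) + j := by exact_mod_cast hj.symm
      linear_combination this - (a.choose k : ℚ) * ha
    have ha : (a:ℚ) = (k:ℚ) + (j:ℚ) - 1 := by
      have : ((k + j : ℕ) : ℚ) = ((a + 1 : ℕ) : ℚ) := by rw [hj]
      push_cast at this; linarith
    rw [ha]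
    linear_combination ((x + 2*((k:ℚ)+j-1) + 2) * (x - k) * (x + ((k:ℚ)+j-1) + 1 + k)) * r1'
      - (x + ((k:ℚ)+j-1) + 1)^3 * r2'
  · have h0 : a.choose k = 0 := Nat.choose_eq_zero_of_lt (by omega)
    have h1 : (a+1).choose k = 0 := Nat.choose_eq_zero_of_lt (by omega)
    have h2 : (a+1).choose (k+1) = 0 := Nat.choose_eq_zero_of_lt (by omega)
    rw [h0, h1, h2]
    push_cast
    ring


lemma point (x : ℚ) (a k : ℕ) (hx : x + a + 1 ≠ 0) :
    ((a:ℚ)+1)^2 * Tf x (a+1) k - (x + a + 1)^2 * Tf x a k = Uf x a (k+1) - Uf x a k := by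
  have ha0 : ((a:ℚ)+1) ≠ 0 := by positivity
  have hk1 : ((k:ℚ)+1) ≠ 0 := by positivity
  have hf0 : ((k.factorial : ℚ)) ≠ 0 := by
    exact_mod_cast Nat.factorial_ne_zero k
  have hW1 : Wf x (a+1) k = (x + a + 1 + k) * Wf x a k / (x + a + 1) := by
    rw [eq_div_iff hx]
    linear_combination Wf_shift x a k
  have hfac : (((k+1).factorial : ℚ)) = ((k:ℚ)+1) * (k.factorial : ℚ) := by
    rw [Nat.factorial_succ]; push_cast; ring
  unfold Tf Uf
  rw [hW1, Wf_succ, hfac]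
  push_cast
  set W := Wf x a k with hWdef
  set f := (k.factorial : ℚ) with hfdef
  field_simp
  linear_combination W * core a k x


lemma sum_step (x : ℚ) (a : ℕ) (hx : x + a + 1 ≠ 0) :
    ((a:ℚ)+1)^2 * ∑ k ∈ Finset.range (a+2), Tf x (a+1) k
      = (x + a + 1)^2 * ∑ k ∈ Finset.range (a+1), Tf x a k := by
  have h := Finset.sum_range_sub (fun k => Uf x a k) (a+2)
  have hsum : ∑ k ∈ Finset.range (a+2),
      (((a:ℚ)+1)^2 * Tf x (a+1) k - (x+a+1)^2 * Tf x a k) = Uf x a (a+2) - Uf x a 0 := by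
    rw [Finset.sum_congr rfl (fun k _ => point x a k hx), h]
  have hU2 : Uf x a (a+2) = 0 := by
    simp [Uf, Nat.choose_eq_zero_of_lt (by omega : a+1 < a+2)]
  have hU0 : Uf x a 0 = 0 := by simp [Uf]
  have hT : Tf x a (a+1) = 0 := by
    simp [Tf, Nat.choose_succ_self]
  rw [Finset.sum_sub_distrib, ← Finset.mul_sum, ← Finset.mul_sum, hU2, hU0] at hsum
  rw [Finset.sum_range_succ (fun k => Tf x a k) (a+1), hT, add_zero] at hsum
  linarith

lemma main (x : ℚ) (hx : ∀ n : ℕ, x + n + 1 ≠ 0) : ∀ a : ℕ,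
    ∑ k ∈ Finset.range (a+1), Tf x a k
      = ((∏ i ∈ Finset.range a, (x+1+i)) / (a.factorial : ℚ))^2 := by
  intro a
  induction a with
  | zero => simp [Tf, Wf]
  | succ a ih =>
      have ha0 : ((a:ℚ)+1) ≠ 0 := by positivity
      have hs := sum_step x a (hx a)
      rw [ih] at hs
      have hfa : ((a.factorial : ℚ)) ≠ 0 := by exact_mod_cast Nat.factorial_ne_zero a
      rw [Finset.prod_range_succ, Nat.factorial_succ]
      have hgoal : (((a:ℚ)+1))^2 * (((∏ i ∈ Finset.range a, (x+1+i)) * (x+1+a)) / (((a:ℚ)+1) * (a.factorial:ℚ)))^2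
          = (x+a+1)^2 * ((∏ i ∈ Finset.range a, (x+1+i)) / (a.factorial : ℚ))^2 := by
        field_simp
        ring
      push_cast
      apply mul_left_cancel₀ (pow_ne_zero 2 ha0)
      rw [hs, hgoal]


lemma gbinom_succ (x : ℚ) (k : ℕ) :
    gbinom x (k+1) = gbinom x k * (x - k) / (k+1) := by
  have hf : ((k.factorial : ℚ)) ≠ 0 := by exact_mod_cast Nat.factorial_ne_zero k
  have hk1 : ((k:ℚ)+1) ≠ 0 := by positivity
  unfold gbinom
  rw [Finset.prod_range_succ, Nat.factorial_succ]
  push_cast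
  field_simp

lemma gbinom_nat (n : ℕ) : ∀ k : ℕ, gbinom (n:ℚ) k = n.choose k := by
  intro k
  induction k with
  | zero => simp [gbinom]
  | succ k ih =>
      have hk1 : ((k:ℚ)+1) ≠ 0 := by positivity
      rw [gbinom_succ, ih]
      rcases le_or_gt (k+1) n with h | h
      · have hc := congrArg (Nat.cast : ℕ → ℚ) (Nat.choose_succ_right_eq n k)
        push_cast [Nat.cast_sub (by omega : k ≤ n)] at hc
        rw [div_eq_iff hk1]
        linear_combination -hc
      · rcases (by omega : n = k ∨ n < k) with rfl | h2
        · simp [Nat.choose_succ_self]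
        · simp [Nat.choose_eq_zero_of_lt h2, Nat.choose_eq_zero_of_lt (by omega : n < k+1)]

lemma term_eq (a b k : ℕ) :
    (-1:ℚ)^k * gbinom (a:ℚ) k * gbinom (b:ℚ) k * gbinom (-1 - a - b) k = Tf (b:ℚ) a k := by
  have hf : ((k.factorial : ℚ)) ≠ 0 := by exact_mod_cast Nat.factorial_ne_zero k
  have hneg : (∏ i ∈ Finset.range k, ((-1 - (a:ℚ) - b) - i))
      = (-1)^k * ∏ i ∈ Finset.range k, ((b:ℚ) + a + 1 + i) := by
    calc (∏ i ∈ Finset.range k, ((-1 - (a:ℚ) - b) - i))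
        = ∏ i ∈ Finset.range k, ((-1) * ((b:ℚ) + a + 1 + i)) :=
          Finset.prod_congr rfl (fun i _ => by push_cast; ring)
      _ = (-1)^k * ∏ i ∈ Finset.range k, ((b:ℚ) + a + 1 + i) := by
          rw [Finset.prod_mul_distrib, Finset.prod_const, Finset.card_range]
  have hW : Wf (b:ℚ) a k
      = (∏ i ∈ Finset.range k, ((b:ℚ) - i)) * (∏ i ∈ Finset.range k, ((b:ℚ) + a + 1 + i)) := by
    rw [Wf, ← Finset.prod_mul_distrib]
  have hone : (-1:ℚ)^k * (-1:ℚ)^k = 1 := by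
    rw [← pow_add]; exact Even.neg_one_pow ⟨k, rfl⟩
  rw [gbinom_nat a k]
  unfold gbinom Tf
  rw [hneg, hW]
  field_simp
  linear_combination ((a.choose k : ℚ) * (∏ i ∈ Finset.range k, ((b:ℚ) - i))
) * hone

lemma prod_choose (a b : ℕ) :
    (∏ i ∈ Finset.range a, ((b:ℚ) + 1 + i)) / (a.factorial : ℚ) = ((a+b).choose a : ℚ) := by
  have hfa : ((a.factorial : ℚ)) ≠ 0 := by exact_mod_cast Nat.factorial_ne_zero a
  have hfb : ((b.factorial : ℚ)) ≠ 0 := by exact_mod_cast Nat.factorial_ne_zero b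
  have h1 : ∀ c : ℕ, (∏ i ∈ Finset.range c, ((b:ℚ) + 1 + i)) * (b.factorial : ℚ)
      = ((c+b).factorial : ℚ) := by
    intro c
    induction c with
    | zero => simp
    | succ c ih =>
        rw [Finset.prod_range_succ]
        have hh : ((c+1+b).factorial : ℚ) = ((c:ℚ)+b+1) * ((c+b).factorial : ℚ) := by
          rw [show c+1+b = (c+b)+1 by omega, Nat.factorial_succ]; push_cast; ring
        rw [hh]
        push_cast
        linear_combination ((b:ℚ)+1+c) * ih
  have h2 := congrArg (Nat.cast : ℕ → ℚ)
    (Nat.choose_mul_factorial_mul_factorial (Nat.le_add_right a b))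
  rw [Nat.add_sub_cancel_left] at h2
  push_cast at h2
  rw [div_eq_iff hfa]
  have := h1 a
  apply mul_right_cancel₀ hfb
  rw [this]
  linear_combination -h2

end SaalAux

theorem saalschutz_special (p : ℕ) (hp : p.Prime) (hp3 : 3 ≤ p)
    (α β : ℕ) (h1α : 1 ≤ α) (hα : α ≤ p - 1) (h1β : 1 ≤ β) (hβ : β ≤ p - 1) :
    (∑ k ∈ Finset.range (α + 1),
        (-1 : ℚ)^k * gbinom (α : ℚ) k * gbinom (β : ℚ) k * gbinom (-1 - α - β) k
      = (((α + β).choose α : ℚ))^2) ∧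
    (p ≤ α + β → ∃ m : ℤ, ∑ k ∈ Finset.range (α + 1),
        (-1 : ℚ)^k * gbinom (α : ℚ) k * gbinom (β : ℚ) k * gbinom (-1 - α - β) k
      = (p : ℚ)^2 * m) := by
  have hsum : ∑ k ∈ Finset.range (α + 1),
      (-1 : ℚ)^k * gbinom (α : ℚ) k * gbinom (β : ℚ) k * gbinom (-1 - α - β) k
      = (((α + β).choose α : ℚ))^2 := by
    calc ∑ k ∈ Finset.range (α + 1),
        (-1 : ℚ)^k * gbinom (α : ℚ) k * gbinom (β : ℚ) k * gbinom (-1 - α - β) k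
        = ∑ k ∈ Finset.range (α + 1), SaalAux.Tf (β:ℚ) α k :=
          Finset.sum_congr rfl (fun k _ => SaalAux.term_eq α β k)
      _ = ((∏ i ∈ Finset.range α, ((β:ℚ)+1+i)) / (α.factorial : ℚ))^2 :=
          SaalAux.main (β:ℚ) (fun n => by positivity) α
      _ = (((α + β).choose α : ℚ))^2 := by rw [SaalAux.prod_choose]
  refine ⟨hsum, fun hpab => ?_⟩
  obtain ⟨m, hm⟩ := Nat.Prime.dvd_choose_add hp (by omega) (by omega) hpab
  exact ⟨(m:ℤ)^2, by rw [hsum, hm]; push_cast; ring⟩
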